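/- Let E and F be division rings and let φ : Mat₂(E) → Mat₂(F) be a unital injective ring homomorphism of the form φ(x) = σ applied entrywise to x, for a non-surjective ring embedding σ : E → F. Then the matrices e_λ = [[1,0],[λ,0]] for λ ∈ F \ σ(E) are idempotents of Mat₂(F) whose principal right ideals e_λ·Mat₂(F) are pairwise distinct and none lies in the image of the map xMat₂(E) ↦ φ(x)Mat₂(F). -/
import Mathlib


/-- The principal right ideal `xR` of a ring `R`, as a set. -/
def rIdeal {R : Type*} [Ring R] (x : R) : Set R := {y | ∃ r, y = x * r}

theorem self_mem_rIdeal {R : Type*} [Ring R] (x : R) : x ∈ rIdeal x :=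
  ⟨1, (mul_one x).symm⟩

/-- Let `σ : E → F` be a non-surjective ring embedding of
division rings and `φ : Mat₂(E) → Mat₂(F)` the induced entrywise homomorphism.
For `λ ∈ F \ σ(E)`, the matrices `e_λ = [[1,0],[λ,0]]` are idempotents of
`Mat₂(F)` whose principal right ideals are pairwise distinct and none of which
lies in the image of the induced map `x·Mat₂(E) ↦ φ(x)·Mat₂(F)`. -/
theorem stmt14 {E F : Type*} [DivisionRing E] [DivisionRing F]
    (σ : E →+* F) (hσ : ¬ Function.Surjective σ)
    (l : F) (hl : l ∉ Set.range σ) :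
    (!![(1 : F), 0; l, 0] * !![(1 : F), 0; l, 0] = !![(1 : F), 0; l, 0]) ∧
    (∀ m : F, m ∉ Set.range σ → l ≠ m →
      rIdeal !![(1 : F), 0; l, 0] ≠ rIdeal !![(1 : F), 0; m, 0]) ∧
    (∀ x : Matrix (Fin 2) (Fin 2) E,
      rIdeal !![(1 : F), 0; l, 0] ≠ rIdeal (x.map σ)) := by
  refine ⟨?_, ?_, ?_⟩
  · ext i j
    fin_cases i <;> fin_cases j <;>
      simp [Matrix.mul_apply, Fin.sum_univ_two]
  · intro m hm hne h
    obtain ⟨r, hr⟩ : !![(1:F),0;l,0] ∈ rIdeal !![(1:F),0;m,0] := by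
      rw [← h]; exact self_mem_rIdeal _
    have h00 := congrFun (congrFun hr 0) 0
    have h10 := congrFun (congrFun hr 1) 0
    simp [Matrix.mul_apply, Fin.sum_univ_two] at h00 h10
    exact hne (by rw [h10, ← h00, mul_one])
  · intro x h
    obtain ⟨r, hr⟩ : !![(1:F),0;l,0] ∈ rIdeal (x.map σ) := by
      rw [← h]; exact self_mem_rIdeal _
    obtain ⟨s, hs⟩ : (x.map σ) ∈ rIdeal !![(1:F),0;l,0] := by
      rw [h]; exact self_mem_rIdeal _
    have hA00 := congrFun (congrFun hs 0) 0
    have hA01 := congrFun (congrFun hs 0) 1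
    have hA10 := congrFun (congrFun hs 1) 0
    have hA11 := congrFun (congrFun hs 1) 1
    simp [Matrix.mul_apply, Fin.sum_univ_two, Matrix.map_apply] at hA00 hA01 hA10 hA11
    -- hA00 : σ (x 0 0) = s 0 0, etc.
    have h1 := congrFun (congrFun hr 0) 0
    simp [Matrix.mul_apply, Fin.sum_univ_two, Matrix.map_apply] at h1
    -- h1 : 1 = σ (x 0 0) * r 0 0 + σ (x 0 1) * r 1 0
    by_cases h0 : x 0 0 = 0
    · by_cases h0' : x 0 1 = 0
      · rw [h0, h0', map_zero, zero_mul, zero_mul, add_zero] at h1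
        exact one_ne_zero h1
      · apply hl
        refine ⟨x 1 1 * (x 0 1)⁻¹, ?_⟩
        have : σ (x 1 1) = l * σ (x 0 1) := by rw [hA11, hA01]
        rw [map_mul, map_inv₀, this, mul_inv_cancel_right₀ ((map_ne_zero σ).mpr h0')]
    · apply hl
      refine ⟨x 1 0 * (x 0 0)⁻¹, ?_⟩
      have : σ (x 1 0) = l * σ (x 0 0) := by rw [hA10, hA00]
      rw [map_mul, map_inv₀, this, mul_inv_cancel_right₀ ((map_ne_zero σ).mpr h0)]
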